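/- Let n ≥ 2 be an even integer and let Q = I_n − 𝟙𝟙ᵀ ∈ ℝ^{n×n}, where 𝟙 is the all-ones vector (so Q has zero diagonal and all off-diagonal entries equal to −1). Then max over x ∈ {−1,1}^n of xᵀQx equals n, while max over x, y ∈ {−1,1}^n of xᵀQy equals n² − n. In particular, the decoupled maximum exceeds the coupled maximum by a factor of n − 1. -/

import Mathlib

private lemma e_mul_le (a b : Bool) :
    (if a then (1:ℝ) else -1) * (if b then (1:ℝ) else -1) ≤ 1 := by
  cases a <;> cases b <;> norm_num

private lemma e_sq (a : Bool) :
    (if a then (1:ℝ) else -1) * (if a then (1:ℝ) else -1) = 1 := by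
  cases a <;> norm_num

theorem stmt_19 (n : ℕ) (hn : 2 ≤ n) (hne : Even n)
    (Q : Matrix (Fin n) (Fin n) ℝ)
    (hQ : ∀ i j, Q i j = if i = j then 0 else -1) :
    (⨆ x : Fin n → Bool, ∑ i, ∑ j,
        (if x i then (1 : ℝ) else -1) * Q i j * (if x j then (1 : ℝ) else -1)) = n ∧
    (⨆ x : Fin n → Bool, ⨆ y : Fin n → Bool, ∑ i, ∑ j,
        (if x i then (1 : ℝ) else -1) * Q i j * (if y j then (1 : ℝ) else -1)) =
      (n : ℝ) ^ 2 - n := by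
  set e : Bool → ℝ := fun b => if b then (1:ℝ) else -1 with he
  -- key identity
  have key : ∀ x y : Fin n → Bool,
      (∑ i, ∑ j, e (x i) * Q i j * e (y j))
        = (∑ i, e (x i) * e (y i)) - (∑ i, e (x i)) * (∑ j, e (y j)) := by
    intro x y
    have h1 : ∀ i j : Fin n, e (x i) * Q i j * e (y j)
        = (if i = j then e (x i) * e (y j) else 0) - e (x i) * e (y j) := by
      intro i j
      rw [hQ]
      by_cases h : i = j <;> simp [h] <;> ring
    simp_rw [h1, Finset.sum_sub_distrib]
    congr 1
    · simp
    · simp_rw [← Finset.mul_sum]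
      rw [← Finset.sum_mul]
  -- per-entry bound for decoupled case
  have entry_le : ∀ (x y : Fin n → Bool) (i j : Fin n),
      e (x i) * Q i j * e (y j) ≤ if i = j then 0 else 1 := by
    intro x y i j
    rw [hQ]
    by_cases h : i = j
    · simp [h]
    · simp only [h, if_false]
      cases hx : x i <;> cases hy : y j <;> simp [he, hx, hy]
  have hcount : (∑ i : Fin n, ∑ j : Fin n, (if i = j then (0:ℝ) else 1)) = (n:ℝ)^2 - n := by
    have h1 : ∀ i : Fin n, (∑ j : Fin n, (if i = j then (0:ℝ) else 1)) = (n:ℝ) - 1 := by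
      intro i
      have h2 : ∀ j : Fin n, (if i = j then (0:ℝ) else 1) = 1 - (if i = j then 1 else 0) := by
        intro j; split <;> ring
      simp_rw [h2, Finset.sum_sub_distrib, Finset.sum_const, Finset.sum_ite_eq,
        Finset.mem_univ, if_true, Finset.card_univ, Fintype.card_fin, nsmul_eq_mul, mul_one]
    simp_rw [h1, Finset.sum_const, Finset.card_univ, Fintype.card_fin, nsmul_eq_mul]
    ring
  -- the balanced point
  obtain ⟨m, hm⟩ := hne
  have hnm : n = 2 * m := by omega
  set x₀ : Fin n → Bool := fun i => decide ((i : ℕ) < m) with hx₀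
  have hbal : (∑ i : Fin n, e (x₀ i)) = 0 := by
    have h3 : ∀ i : Fin n, e (x₀ i) = if (i : ℕ) < m then (1:ℝ) else -1 := by
      intro i; simp [he, hx₀]
    simp_rw [h3]
    rw [Fin.sum_univ_eq_sum_range (fun i => if i < m then (1:ℝ) else -1), hnm,
      Finset.sum_ite]
    have h4 : Finset.filter (fun i => i < m) (Finset.range (2*m)) = Finset.range m := by
      ext i; simp only [Finset.mem_filter, Finset.mem_range]; omega
    have h5 : Finset.filter (fun i => ¬ i < m) (Finset.range (2*m)) = Finset.Ico m (2*m) := by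
      ext i; simp only [Finset.mem_filter, Finset.mem_range, Finset.mem_Ico]; omega
    rw [h4, h5]
    simp only [Finset.sum_const, Finset.card_range, Nat.card_Ico, nsmul_eq_mul,
      mul_one, mul_neg_one]
    rw [Nat.cast_sub (by omega : m ≤ 2*m)]
    push_cast
    ring
  -- value at balanced point
  have hval₀ : (∑ i, ∑ j, e (x₀ i) * Q i j * e (x₀ j)) = n := by
    rw [key, hbal, mul_zero, sub_zero]
    have : ∀ i : Fin n, e (x₀ i) * e (x₀ i) = 1 := fun i => e_sq _
    simp_rw [this]; simp
  -- coupled upper bound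
  have hub : ∀ x : Fin n → Bool, (∑ i, ∑ j, e (x i) * Q i j * e (x j)) ≤ n := by
    intro x
    rw [key]
    have h1 : (∑ i : Fin n, e (x i) * e (x i)) = n := by
      simp_rw [show ∀ i : Fin n, e (x i) * e (x i) = 1 from fun i => e_sq (x i)]; simp
    rw [h1]
    nlinarith [sq_nonneg (∑ i : Fin n, e (x i))]
  -- decoupled upper bound
  have hub2 : ∀ x y : Fin n → Bool,
      (∑ i, ∑ j, e (x i) * Q i j * e (y j)) ≤ (n:ℝ)^2 - n := by
    intro x y
    calc (∑ i, ∑ j, e (x i) * Q i j * e (y j))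
        ≤ ∑ i : Fin n, ∑ j : Fin n, (if i = j then (0:ℝ) else 1) := by
          apply Finset.sum_le_sum; intro i _
          apply Finset.sum_le_sum; intro j _
          exact entry_le x y i j
      _ = (n:ℝ)^2 - n := hcount
  -- decoupled value at (all true, all false)
  have hval2 : (∑ i, ∑ j, e ((fun _ => true) i) * Q i j * e ((fun _ => false) j))
      = (n:ℝ)^2 - n := by
    have : ∀ i j : Fin n, e true * Q i j * e false = if i = j then (0:ℝ) else 1 := by
      intro i j; rw [hQ]; by_cases h : i = j <;> simp [h, he]
    simp_rw [this]; exact hcount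
  constructor
  · apply le_antisymm
    · exact ciSup_le hub
    · rw [← hval₀]
      exact le_ciSup (f := fun x : Fin n → Bool => ∑ i, ∑ j, e (x i) * Q i j * e (x j))
        (Set.Finite.bddAbove (Set.finite_range _)) x₀
  · apply le_antisymm
    · exact ciSup_le fun x => ciSup_le fun y => hub2 x y
    · calc ((n:ℝ)^2 - n) = _ := hval2.symm
        _ ≤ ⨆ y : Fin n → Bool, ∑ i, ∑ j, e ((fun _ => true) i) * Q i j * e (y j) :=
            le_ciSup (f := fun y : Fin n → Bool =>
              ∑ i, ∑ j, e ((fun _ => true) i) * Q i j * e (y j))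
              (Set.Finite.bddAbove (Set.finite_range _)) (fun _ => false)
        _ ≤ _ := le_ciSup (f := fun x : Fin n → Bool =>
              ⨆ y : Fin n → Bool, ∑ i, ∑ j, e (x i) * Q i j * e (y j))
              (Set.Finite.bddAbove (Set.finite_range _)) (fun _ => true)
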